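/- Let n ≥ 2 and m ≥ 1 be integers, 0 < h₁ < ⋯ < hₙ and 0 < g₁ < ⋯ < g_m with hₙ > g_m, let p ∈ ℝⁿ and q ∈ ℝᵐ be probability vectors with positive entries (in particular pₙ > 0), let w ≥ 1, Q > 0 and 0 ≤ Q* ≤ Q. Set aᵢ = Q* + 1/hᵢ², bⱼ = Q* + 1/gⱼ², T = Σᵢ pᵢ/aᵢ, and assume T = w Σⱼ qⱼ/bⱼ. Define T₁ = (1/(1−pₙ)) Σ_{i=1}^{n−1} pᵢ/aᵢ = (T − pₙ/aₙ)/(1−pₙ), and let k ∈ {0,1,…,m} be such that bⱼ > 1/T₁ for j ≤ k and bⱼ ≤ 1/T₁ for j > k. If (w−1)T₁ ≥ w Σ_{j=1}^k qⱼ(T₁ − 1/bⱼ), then there exist a real a₀ > a₁ and an (n+1)×m matrix A (rows indexed 0,1,…,n) with nonnegative entries such that: (i) each column of A sums to 1; (ii) a₀A_{0j} + Σ_{i=1}^n Aᵢⱼ aᵢ = bⱼ for every j; and (iii) for every k′ ∈ {0,1,…,n}, Σ_{i=1}^{k′} pᵢ/aᵢ ≤ w Σⱼ (qⱼ/bⱼ)(Σ_{i=0}^{k′}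 Aᵢⱼ). -/

import Mathlib

private lemma stmt6aux (D M X Y Z w : ℝ) (hM0 : 0 ≤ M) (hMD : M ≤ D)
    (hX0 : 0 ≤ X) (hw0 : 0 ≤ w)
    (hK : D ≤ w * (X + Y * D) + w * Z * D) :
    M * D ≤ (w * ((X + Y * M) + Z * M)) * D := by
  nlinarith [mul_le_mul_of_nonneg_right hK hM0,
    mul_nonneg (mul_nonneg hw0 hX0) (sub_nonneg.2 hMD)]


set_option maxHeartbeats 2000000

/-- Theorem 2 (thm1) of the paper: under condition (thm:cond2), there exists a
virtual-fade value `a₀ > a₁` and an `(n+1)×m` nonnegative matrix `A` (rows indexed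
`0,1,…,n`, here by `Fin (n+3)` with the genuine fades indexed via `Fin.succ`)
satisfying the feasibility conditions of Case 1 of Theorem 1.
Here `n ≥ 2` is encoded as `n + 2` and `m ≥ 1` as `m + 1`. -/
theorem stmt6 (n m : ℕ)
    (h : Fin (n + 2) → ℝ) (g : Fin (m + 1) → ℝ)
    (hh0 : ∀ i, 0 < h i) (hhmono : StrictMono h)
    (hg0 : ∀ j, 0 < g j) (hgmono : StrictMono g)
    (hng : h (Fin.last (n + 1)) > g (Fin.last m))
    (p : Fin (n + 2) → ℝ) (q : Fin (m + 1) → ℝ)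
    (hp : ∀ i, 0 < p i) (hpsum : ∑ i, p i = 1)
    (hq : ∀ j, 0 < q j) (hqsum : ∑ j, q j = 1)
    (w Q Qstar : ℝ) (hw : 1 ≤ w) (hQ : 0 < Q) (hQs : 0 ≤ Qstar) (hQsQ : Qstar ≤ Q)
    (a : Fin (n + 2) → ℝ) (b : Fin (m + 1) → ℝ)
    (ha : ∀ i, a i = Qstar + 1 / (h i) ^ 2)
    (hb : ∀ j, b j = Qstar + 1 / (g j) ^ 2)
    (T : ℝ) (hT : T = ∑ i, p i / a i)
    (hbal : T = w * ∑ j, q j / b j)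
    (T1 : ℝ)
    (hT1 : T1 = (T - p (Fin.last (n + 1)) / a (Fin.last (n + 1))) /
      (1 - p (Fin.last (n + 1))))
    (k : ℕ) (hk : k ≤ m + 1)
    (hksep1 : ∀ j : Fin (m + 1), (j : ℕ) < k → 1 / T1 < b j)
    (hksep2 : ∀ j : Fin (m + 1), k ≤ (j : ℕ) → b j ≤ 1 / T1)
    (hcond : (w - 1) * T1 ≥
      w * ∑ j ∈ Finset.univ.filter (fun j : Fin (m + 1) => (j : ℕ) < k),
        q j * (T1 - 1 / b j)) :
    ∃ a0 : ℝ, a0 > a 0 ∧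
      ∃ A : Matrix (Fin (n + 3)) (Fin (m + 1)) ℝ,
        (∀ r j, 0 ≤ A r j) ∧
        (∀ j, ∑ r, A r j = 1) ∧
        (∀ j, a0 * A 0 j + ∑ i : Fin (n + 2), A i.succ j * a i = b j) ∧
        (∀ k' : Fin (n + 3),
          ∑ i ∈ Finset.univ.filter (fun i : Fin (n + 2) => i.succ ≤ k'), p i / a i ≤
          w * ∑ j, (q j / b j) * ∑ r ∈ Finset.Iic k', A r j) := by
  classical
  set L : Fin (n + 2) := Fin.last (n + 1) with hLdef
  have sqlt : ∀ x y : ℝ, 0 < x → x < y → 1 / y ^ 2 < 1 / x ^ 2 := by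
    intro x y hx hxy
    have hy : 0 < y := hx.trans hxy
    have h2 : x ^ 2 < y ^ 2 := by nlinarith
    exact one_div_lt_one_div_of_lt (by positivity) h2
  have haipos : ∀ i, 0 < a i := by
    intro i; rw [ha i]
    have h1 : 0 < 1 / (h i) ^ 2 := by have := hh0 i; positivity
    linarith
  have hbjpos : ∀ j, 0 < b j := by
    intro j; rw [hb j]
    have h1 : 0 < 1 / (g j) ^ 2 := by have := hg0 j; positivity
    linarith
  have hbanti : ∀ j j' : Fin (m + 1), j ≤ j' → b j' ≤ b j := by
    intro j j' hjj
    rcases eq_or_lt_of_le hjj with rfl | hlt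
    · exact le_refl _
    · rw [hb j, hb j']
      have := sqlt (g j) (g j') (hg0 j) (hgmono hlt)
      linarith
  have halb : ∀ j, a L < b j := by
    intro j
    rw [ha, hb]
    have h1 : g j ≤ g (Fin.last m) := hgmono.monotone (Fin.le_last j)
    have h2 : g j < h L := lt_of_le_of_lt h1 hng
    have := sqlt (g j) (h L) (hg0 j) h2
    linarith
  have hala : ∀ i, i ≠ L → a L < a i := by
    intro i hi
    have hilt : i < L := lt_of_le_of_ne (Fin.le_last i) hi
    rw [ha, ha]
    have := sqlt (h i) (h L) (hh0 i) (hhmono hilt)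
    linarith
  have h0L : (0 : Fin (n + 2)) ≠ L := Fin.last_pos.ne
  have h0mem : (0 : Fin (n + 2)) ∈ Finset.univ.erase L :=
    Finset.mem_erase.2 ⟨h0L, Finset.mem_univ 0⟩
  have hsplitP : ∀ f : Fin (n + 2) → ℝ,
      ∑ i, f i = f L + ∑ i ∈ Finset.univ.erase L, f i :=
    fun f => (Finset.add_sum_erase Finset.univ f (Finset.mem_univ L)).symm
  have h1pl : ∑ i ∈ Finset.univ.erase L, p i = 1 - p L := by
    have := hsplitP p; rw [hpsum] at this; linarith
  have hpl1 : p L < 1 := by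
    have hpos : 0 < ∑ i ∈ Finset.univ.erase L, p i :=
      Finset.sum_pos (fun i _ => hp i) ⟨0, h0mem⟩
    linarith
  have h1plpos : (0 : ℝ) < 1 - p L := by linarith
  set D := ∑ i ∈ Finset.univ.erase L, p i / a i with hDdef
  have hDpos : 0 < D :=
    Finset.sum_pos (fun i _ => div_pos (hp i) (haipos i)) ⟨0, h0mem⟩
  have hTD : T = p L / a L + D := by rw [hT]; exact hsplitP _
  have hT1D : T1 = D / (1 - p L) := by rw [hT1]; congr 1; linarith
  have hT1pos : 0 < T1 := by rw [hT1D]; positivity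
  have hDT1 : D = T1 * (1 - p L) := by
    rw [hT1D]; field_simp
  set E := 1 - p L - a L * D with hEdef
  have hEeq : E = ∑ i ∈ Finset.univ.erase L, (p i - a L * (p i / a i)) := by
    rw [Finset.sum_sub_distrib, ← Finset.mul_sum, ← hDdef, h1pl, hEdef]
  have hEpos : 0 < E := by
    rw [hEeq]
    apply Finset.sum_pos _ ⟨0, h0mem⟩
    intro i hi
    have hiL : i ≠ L := (Finset.mem_erase.1 hi).1
    have h1 : a L / a i < 1 := (div_lt_one (haipos i)).2 (hala i hiL)
    have h2 : a L * (p i / a i) = (a L / a i) * p i := by ring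
    nlinarith [hp i]
  set a0 := max (b 0) (a 0 + 1) with ha0def
  have ha0b : ∀ j, b j ≤ a0 := fun j =>
    le_trans (hbanti 0 j (Fin.zero_le j)) (le_max_left _ _)
  have ha0gt : a 0 < a0 := lt_of_lt_of_le (lt_add_one _) (le_max_right _ _)
  set tt : Fin (m + 1) → ℝ := fun j => (b j - 1 / T1) / (a0 - 1 / T1) with httdef
  set ll : Fin (m + 1) → ℝ := fun j => (b j - a L) / E with hlldef
  have ha0T1 : ∀ j : Fin (m + 1), (j : ℕ) < k → 1 / T1 < a0 := fun j hj =>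
    lt_of_lt_of_le (hksep1 j hj) (ha0b j)
  have htt0 : ∀ j : Fin (m+1), (j : ℕ) < k → 0 ≤ tt j := by
    intro j hj
    have h1 := hksep1 j hj
    have h2 := ha0T1 j hj
    exact div_nonneg (by linarith) (by linarith)
  have htt1 : ∀ j : Fin (m+1), (j : ℕ) < k → tt j ≤ 1 := by
    intro j hj
    have h2 := ha0T1 j hj
    rw [httdef]
    exact (div_le_one (by linarith)).2 (by linarith [ha0b j])
  have hll0 : ∀ j : Fin (m+1), 0 ≤ ll j := fun j =>
    div_nonneg (by linarith [halb j]) hEpos.le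
  have hllD : ∀ j : Fin (m+1), k ≤ (j : ℕ) → ll j * D ≤ 1 := by
    intro j hj
    have hbj : b j * T1 ≤ 1 := by
      have h1 := hksep2 j hj
      have h2 : b j * T1 ≤ (1 / T1) * T1 := mul_le_mul_of_nonneg_right h1 hT1pos.le
      rwa [one_div_mul_cancel hT1pos.ne'] at h2
    have h3 : (b j - a L) * D ≤ E := by
      rw [hEdef, hDT1]
      nlinarith [mul_le_mul_of_nonneg_right hbj h1plpos.le]
    rw [hlldef, div_mul_eq_mul_div, div_le_one hEpos]
    exact h3
  set A : Matrix (Fin (n + 3)) (Fin (m + 1)) ℝ := Matrix.of (fun r j =>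
    if (j : ℕ) < k then
      Fin.cases (tt j) (fun i => if i = L then 0 else (1 - tt j) * (p i / a i) / D) r
    else
      Fin.cases 0 (fun i => if i = L then 1 - ll j * D else ll j * (p i / a i)) r)
    with hAdef
  have hA0 : ∀ j : Fin (m+1), A 0 j = if (j : ℕ) < k then tt j else 0 := by
    intro j; rw [hAdef]
    by_cases hj : (j : ℕ) < k <;> simp [hj]
  have hAsucc : ∀ (i : Fin (n + 2)) j, A i.succ j =
      if (j : ℕ) < k then (if i = L then 0 else (1 - tt j) * (p i / a i) / D)
      else (if i = L then 1 - ll j * D else ll j * (p i / a i)) := by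
    intro i j; rw [hAdef]
    by_cases hj : (j : ℕ) < k <;> simp [hj]

  have hApos : ∀ r j, 0 ≤ A r j := by
    intro r j
    induction r using Fin.cases with
    | zero =>
      rw [hA0]
      split_ifs with hj
      · exact htt0 j hj
      · exact le_refl 0
    | succ i =>
      rw [hAsucc]
      split_ifs with hj hiL hiL
      · exact le_refl 0
      · have := htt1 j hj
        have hpa : 0 ≤ p i / a i := (div_pos (hp i) (haipos i)).le
        apply div_nonneg (mul_nonneg (by linarith) hpa) hDpos.le
      · linarith [hllD j (le_of_not_gt hj)]
      · exact mul_nonneg (hll0 j) (div_pos (hp i) (haipos i)).le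
  have hcol : ∀ j, ∑ r, A r j = 1 := by
    intro j
    rw [Fin.sum_univ_succ, hA0]
    by_cases hj : (j : ℕ) < k
    · rw [if_pos hj]
      have e1 : ∀ i : Fin (n + 2), A i.succ j =
          if i = L then 0 else ((1 - tt j) / D) * (p i / a i) := by
        intro i; rw [hAsucc, if_pos hj]
        split_ifs with hiL
        · rfl
        · ring
      rw [Finset.sum_congr rfl (fun i _ => e1 i),
        hsplitP (fun i => if i = L then 0 else ((1 - tt j) / D) * (p i / a i)),
        if_pos rfl]
      have e2 : ∑ i ∈ Finset.univ.erase L,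
          (if i = L then 0 else ((1 - tt j) / D) * (p i / a i)) =
          ∑ i ∈ Finset.univ.erase L, ((1 - tt j) / D) * (p i / a i) :=
        Finset.sum_congr rfl (fun i hi => if_neg (Finset.mem_erase.1 hi).1)
      rw [e2, ← Finset.mul_sum, ← hDdef]
      field_simp
      ring
    · rw [if_neg hj]
      have e1 : ∀ i : Fin (n + 2), A i.succ j =
          if i = L then 1 - ll j * D else ll j * (p i / a i) := by
        intro i; rw [hAsucc, if_neg hj]
      rw [Finset.sum_congr rfl (fun i _ => e1 i),
        hsplitP (fun i => if i = L then 1 - ll j * D else ll j * (p i / a i)),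
        if_pos rfl]
      have e2 : ∑ i ∈ Finset.univ.erase L,
          (if i = L then 1 - ll j * D else ll j * (p i / a i)) =
          ∑ i ∈ Finset.univ.erase L, ll j * (p i / a i) :=
        Finset.sum_congr rfl (fun i hi => if_neg (Finset.mem_erase.1 hi).1)
      rw [e2, ← Finset.mul_sum, ← hDdef]
      ring
  have hmean : ∀ j, a0 * A 0 j + ∑ i : Fin (n + 2), A i.succ j * a i = b j := by
    intro j
    rw [hA0]
    by_cases hj : (j : ℕ) < k
    · rw [if_pos hj]
      have e1 : ∀ i : Fin (n + 2), A i.succ j * a i =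
          if i = L then 0 else ((1 - tt j) / D) * p i := by
        intro i; rw [hAsucc, if_pos hj]
        split_ifs with hiL
        · ring
        · have hane := (haipos i).ne'
          field_simp
      rw [Finset.sum_congr rfl (fun i _ => e1 i),
        hsplitP (fun i => if i = L then 0 else ((1 - tt j) / D) * p i),
        if_pos rfl]
      have e2 : ∑ i ∈ Finset.univ.erase L,
          (if i = L then 0 else ((1 - tt j) / D) * p i) =
          ∑ i ∈ Finset.univ.erase L, ((1 - tt j) / D) * p i :=
        Finset.sum_congr rfl (fun i hi => if_neg (Finset.mem_erase.1 hi).1)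
      rw [e2, ← Finset.mul_sum, h1pl]
      have ha0ne : a0 - 1 / T1 ≠ 0 := by
        have := ha0T1 j hj; linarith
      have hstep : (1 - tt j) / D * (1 - p L) = (1 - tt j) * (1 / T1) := by
        rw [hDT1]
        field_simp
      have hstep2 : tt j * (a0 - 1 / T1) = b j - 1 / T1 := by
        rw [httdef]
        exact div_mul_cancel₀ _ ha0ne
      rw [hstep]
      linear_combination hstep2
    · rw [if_neg hj]
      have e1 : ∀ i : Fin (n + 2), A i.succ j * a i =
          if i = L then (1 - ll j * D) * a L else ll j * p i := by
        intro i; rw [hAsucc, if_neg hj]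
        split_ifs with hiL
        · rw [hiL]
        · have hane := (haipos i).ne'
          field_simp
      rw [Finset.sum_congr rfl (fun i _ => e1 i),
        hsplitP (fun i => if i = L then (1 - ll j * D) * a L else ll j * p i),
        if_pos rfl]
      have e2 : ∑ i ∈ Finset.univ.erase L,
          (if i = L then (1 - ll j * D) * a L else ll j * p i) =
          ∑ i ∈ Finset.univ.erase L, ll j * p i :=
        Finset.sum_congr rfl (fun i hi => if_neg (Finset.mem_erase.1 hi).1)
      rw [e2, ← Finset.mul_sum, h1pl]
      have hstep : ll j * E = b j - a L := by
        rw [hlldef]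
        exact div_mul_cancel₀ _ hEpos.ne'
      rw [hEdef] at hstep
      linear_combination hstep

  set F := Finset.univ.filter (fun j : Fin (m + 1) => (j : ℕ) < k) with hFdef
  set G := Finset.univ.filter (fun j : Fin (m + 1) => ¬ (j : ℕ) < k) with hGdef
  set S := ∑ j ∈ F, q j with hSdef
  set U := ∑ j ∈ F, q j / b j with hUdef
  set V := ∑ j ∈ G, q j / b j with hVdef
  have hFGq : S + ∑ j ∈ G, q j = 1 := by
    rw [hSdef, hGdef, hFdef, Finset.sum_filter_add_sum_filter_not]
    exact hqsum
  have hUV : w * (U + V) = T := by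
    rw [hUdef, hVdef, hbal, hFdef, hGdef, Finset.sum_filter_add_sum_filter_not]
  have hcond' : (w - 1) * T1 ≥ w * (T1 * S - U) := by
    have e : ∑ j ∈ F, q j * (T1 - 1 / b j) = T1 * S - U := by
      rw [hSdef, hUdef, Finset.mul_sum, ← Finset.sum_sub_distrib]
      apply Finset.sum_congr rfl
      intro j _
      have := (hbjpos j).ne'
      field_simp
    rw [← e]
    exact hcond
  have hUkey : T1 * (1 - w + w * S) ≤ w * U := by nlinarith [hcond']
  set Λ := ∑ j ∈ G, (q j / b j) * ll j with hLamdef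
  have hLam0 : 0 ≤ Λ :=
    Finset.sum_nonneg fun j _ =>
      mul_nonneg (div_pos (hq j) (hbjpos j)).le (hll0 j)
  have hEΛ : E * Λ = (1 - S) - a L * V := by
    have hS2 : (1 : ℝ) - S = ∑ j ∈ G, q j := by linarith
    rw [hLamdef, Finset.mul_sum, hVdef, hS2, Finset.mul_sum, ← Finset.sum_sub_distrib]
    apply Finset.sum_congr rfl
    intro j _
    rw [hlldef]
    have hbne := (hbjpos j).ne'
    have hEne := hEpos.ne'
    field_simp
  have KEY : D ≤ w * U + w * Λ * D := by
    have hUV' : w * V = T - w * U := by linarith [hUV]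
    have halT : a L * T = a L * D + p L := by
      rw [hTD]
      field_simp [(haipos L).ne']
      ring
    have h1 : T1 * (1 - w + w * S) * (1 - p L) ≤ w * U * (1 - p L) :=
      mul_le_mul_of_nonneg_right hUkey h1plpos.le
    have ez : (w * U + w * Λ * D) * E - D * E =
        w * U * (1 - p L) + w * D * (1 - S) - p L * D - D * (1 - p L) := by
      linear_combination (w * D) * hEΛ - (D * a L) * hUV' - D * halT + (w * U - D) * hEdef
    have hslack : 0 ≤ w * U * (1 - p L) + w * D * (1 - S) - p L * D - D * (1 - p L) := by
      rw [hDT1]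
      nlinarith [h1]
    have key' : D * E ≤ (w * U + w * Λ * D) * E := by linarith
    exact le_of_mul_le_mul_right key' hEpos
  refine ⟨a0, ha0gt, A, hApos, hcol, hmean, ?_⟩
  intro k'
  have hIic : ∀ f : Fin (n + 3) → ℝ, ∑ r ∈ Finset.Iic k', f r =
      f 0 + ∑ i ∈ Finset.univ.filter (fun i : Fin (n + 2) => i.succ ≤ k'), f i.succ := by
    intro f
    have h1 : Finset.Iic k' = Finset.univ.filter (fun r => r ≤ k') := by
      ext r; simp
    rw [h1, Finset.sum_filter, Fin.sum_univ_succ, if_pos (Fin.zero_le k'),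
      ← Finset.sum_filter]
  rcases lt_or_eq_of_le (Fin.le_last k') with hlt | hlast
  · -- k' < last
    set I := Finset.univ.filter (fun i : Fin (n + 2) => i.succ ≤ k') with hIdef
    have hIL : ∀ i ∈ I, i ≠ L := by
      intro i hi hiL
      have h1 : i.succ ≤ k' := (Finset.mem_filter.1 hi).2
      rw [hiL, hLdef, Fin.succ_last] at h1
      exact absurd h1 (not_le.2 hlt)
    set M := ∑ i ∈ I, p i / a i with hMdef
    have hM0 : 0 ≤ M :=
      Finset.sum_nonneg fun i _ => (div_pos (hp i) (haipos i)).le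
    have hMD : M ≤ D := by
      rw [hMdef, hDdef]
      apply Finset.sum_le_sum_of_subset_of_nonneg
      · intro i hi
        exact Finset.mem_erase.2 ⟨hIL i hi, Finset.mem_univ i⟩
      · intro i _ _
        exact (div_pos (hp i) (haipos i)).le
    have hcolpart : ∀ j : Fin (m + 1), ∑ r ∈ Finset.Iic k', A r j =
        if (j : ℕ) < k then tt j + (1 - tt j) / D * M else ll j * M := by
      intro j
      rw [hIic (fun r => A r j), hA0]
      by_cases hj : (j : ℕ) < k
      · rw [if_pos hj, if_pos hj]
        congr 1
        have e1 : ∀ i ∈ I, A i.succ j = (1 - tt j) / D * (p i / a i) := by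
          intro i hi
          rw [hAsucc, if_pos hj, if_neg (hIL i hi)]
          ring
        rw [Finset.sum_congr rfl e1, ← Finset.mul_sum, ← hMdef]
      · rw [if_neg hj, if_neg hj, zero_add]
        have e1 : ∀ i ∈ I, A i.succ j = ll j * (p i / a i) := by
          intro i hi
          rw [hAsucc, if_neg hj, if_neg (hIL i hi)]
        rw [Finset.sum_congr rfl e1, ← Finset.mul_sum, ← hMdef]
    set X := ∑ j ∈ F, (q j / b j) * tt j with hXdef
    set Y := ∑ j ∈ F, (q j / b j) * ((1 - tt j) / D) with hYdef
    have hX0 : 0 ≤ X := Finset.sum_nonneg fun j hj =>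
      mul_nonneg (div_pos (hq j) (hbjpos j)).le
        (htt0 j (Finset.mem_filter.1 hj).2)
    have hY0 : 0 ≤ Y := Finset.sum_nonneg fun j hj =>
      mul_nonneg (div_pos (hq j) (hbjpos j)).le
        (div_nonneg (by linarith [htt1 j (Finset.mem_filter.1 hj).2]) hDpos.le)
    have hXY : X + Y * D = U := by
      rw [hXdef, hYdef, hUdef, Finset.sum_mul, ← Finset.sum_add_distrib]
      apply Finset.sum_congr rfl
      intro j _
      rw [mul_assoc, div_mul_cancel₀ _ hDpos.ne']
      ring
    have hRHS : ∑ j, (q j / b j) * ∑ r ∈ Finset.Iic k', A r j =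
        (X + Y * M) + Λ * M := by
      rw [← Finset.sum_filter_add_sum_filter_not Finset.univ
        (fun j : Fin (m + 1) => (j : ℕ) < k)
        (fun j => (q j / b j) * ∑ r ∈ Finset.Iic k', A r j)]
      congr 1
      · rw [hXdef, hYdef, Finset.sum_mul, ← Finset.sum_add_distrib, ← hFdef]
        apply Finset.sum_congr rfl
        intro j hj
        rw [hcolpart j, if_pos (Finset.mem_filter.1 hj).2]
        ring
      · rw [hLamdef, Finset.sum_mul, ← hGdef]
        apply Finset.sum_congr rfl
        intro j hj
        rw [hcolpart j, if_neg (Finset.mem_filter.1 hj).2]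
        ring
    rw [hRHS]
    have KEY2 : D ≤ w * (X + Y * D) + w * Λ * D := by rw [hXY]; exact KEY
    have final' : M * D ≤ (w * ((X + Y * M) + Λ * M)) * D :=
      stmt6aux D M X Y Λ w hM0 hMD hX0 (by linarith) KEY2
    exact le_of_mul_le_mul_right final' hDpos
  · -- k' = last
    have hfull : Finset.univ.filter (fun i : Fin (n + 2) => i.succ ≤ k') =
        Finset.univ := by
      ext i
      simp [hlast, Fin.le_last]
    have hIicfull : Finset.Iic k' = Finset.univ := by
      ext r
      simp [hlast, Fin.le_last]
    rw [hfull, hIicfull]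
    have e1 : ∀ j : Fin (m + 1), (q j / b j) * ∑ r, A r j = q j / b j := by
      intro j
      rw [hcol j, mul_one]
    rw [Finset.sum_congr rfl fun j _ => e1 j, ← hbal, ← hT]
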